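/- Let (Ω_n, β_n)_{n≥1} be an inductive system of probability spaces (β_n : Ω_n → Ω_{n+1} measure preserving), and let G be the abelian group of sequences f = (f_n)_n of measurable functions f_n : Ω_n → {−1,+1} (mod null sets) under pointwise multiplication, with shift homomorphism T defined by (Tf)_n(ω) = f_{n+1}(β_n(ω)). Given X, Y ∈ G, the binary extensions of (Ω_n, β_n)_n determined by X and by Y (via ω̃_n = (ω_n, s_n) ∈ Ω_n × {±1}, β̃_n(ω_n,s_n) = (β_n(ω_n), s_n X_n(ω_n)) resp. with Y_n) are isomorphic if and only if there exists U ∈ G with X·T(U) = Y·U. -/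

import Mathlib

open MeasureTheory

/-- The two-point sign space, encoded additively as `ZMod 2` (`0 ↔ +1`, `1 ↔ −1`). -/
instance : MeasurableSpace (ZMod 2) := ⊤

/-- The uniform (half–half) probability measure on the two signs. -/
noncomputable def binMeasure : Measure (ZMod 2) := (PMF.uniformOfFintype (ZMod 2)).toMeasure

instance : IsProbabilityMeasure binMeasure := by unfold binMeasure; infer_instance

open scoped Classical

lemma zmod2_cases : ∀ c : ZMod 2, c = 0 ∨ c = 1 := by decide

lemma zmod2_ne : ∀ a b : ZMod 2, a ≠ b → b = a + 1 := by decide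

lemma binMeasure_singleton (s : ZMod 2) : binMeasure {s} = 2⁻¹ := by
  unfold binMeasure
  rw [PMF.toMeasure_apply_singleton _ _ (MeasurableSpace.measurableSet_top)]
  simp [PMF.uniformOfFintype_apply]

lemma binMeasure_ae_all {p : ZMod 2 → Prop} (h : ∀ᵐ s ∂binMeasure, p s) : ∀ s, p s := by
  intro s
  by_contra hs
  have hsub : {s} ⊆ {x | ¬ p x} := by
    intro t ht
    simp only [Set.mem_singleton_iff] at ht
    subst ht; exact hs
  have h0 : binMeasure {s} = 0 := measure_mono_null hsub h
  rw [binMeasure_singleton] at h0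
  simp at h0

lemma binMeasure_apply (s : Set (ZMod 2)) :
    binMeasure s = (if (0:ZMod 2) ∈ s then (2⁻¹:ENNReal) else 0) + (if (1:ZMod 2) ∈ s then (2⁻¹:ENNReal) else 0) := by
  unfold binMeasure
  rw [PMF.toMeasure_apply _ (MeasurableSpace.measurableSet_top)]
  rw [tsum_fintype]
  have : (Finset.univ : Finset (ZMod 2)) = {0, 1} := by decide
  rw [this]
  rw [Finset.sum_insert (by decide), Finset.sum_singleton]
  simp [Set.indicator, PMF.uniformOfFintype_apply]

lemma binMeasure_map_add (c : ZMod 2) : Measure.map (· + c) binMeasure = binMeasure := by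
  apply Measure.ext
  intro s hs
  rw [Measure.map_apply measurable_from_top hs, binMeasure_apply, binMeasure_apply]
  rcases zmod2_cases c with rfl | rfl
  · simp
  · have h2 : (1:ZMod 2)+1 = 0 := by decide
    simp only [Set.mem_preimage, zero_add, h2]
    rw [add_comm]

/-- Lemma 5.6: the binary extensions of the inductive system
`(Ω_n, β_n)` determined by `X` and by `Y` are isomorphic iff there exists `U` with
`X · T(U) = Y · U` (written additively in `ZMod 2`). -/
theorem stmt_9 (Ω : ℕ → Type*) [∀ n, MeasurableSpace (Ω n)] [∀ n, StandardBorelSpace (Ω n)]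
    (μ : ∀ n, Measure (Ω n)) [∀ n, IsProbabilityMeasure (μ n)]
    (β : ∀ n, Ω n → Ω (n + 1))
    (hβ : ∀ n, MeasurePreserving (β n) (μ n) (μ (n + 1)))
    (X Y : ∀ n, Ω n → ZMod 2)
    (hX : ∀ n, Measurable (X n)) (hY : ∀ n, Measurable (Y n)) :
    (∃ θ θinv : ∀ n, Ω n × ZMod 2 → Ω n × ZMod 2,
      (∀ n, MeasurePreserving (θ n) ((μ n).prod binMeasure) ((μ n).prod binMeasure)) ∧
      (∀ n, MeasurePreserving (θinv n) ((μ n).prod binMeasure) ((μ n).prod binMeasure)) ∧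
      (∀ n, ∀ᵐ q ∂((μ n).prod binMeasure), θinv n (θ n q) = q) ∧
      (∀ n, ∀ᵐ q ∂((μ n).prod binMeasure), θ n (θinv n q) = q) ∧
      -- `θ_n` commutes with the projections `γ_n`
      (∀ n, ∀ᵐ q ∂((μ n).prod binMeasure), (θ n q).1 = q.1) ∧
      -- `θ_{n+1} ∘ β̃_n = β̃'_n ∘ θ_n`, where `β̃_n(ω,s) = (β_n ω, s + X_n ω)` etc.
      (∀ n, ∀ᵐ q ∂((μ n).prod binMeasure),
        θ (n + 1) (β n q.1, q.2 + X n q.1) = (β n (θ n q).1, (θ n q).2 + Y n (θ n q).1)))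
    ↔
    (∃ U : ∀ n, Ω n → ZMod 2, (∀ n, Measurable (U n)) ∧
      ∀ n, ∀ᵐ ω ∂(μ n), X n ω + U (n + 1) (β n ω) = Y n ω + U n ω) := by
  constructor
  · rintro ⟨θ, θinv, hθ, hθinv, hli, hri, hproj, hcomm⟩
    have key : ∀ n, ∀ᵐ ω ∂(μ n), ∀ s, θ n (ω, s) = (ω, s + (θ n (ω, 0)).2) := by
      intro n
      filter_upwards [Measure.ae_ae_of_ae_prod (hli n), Measure.ae_ae_of_ae_prod (hproj n)] with ω hω1 hω2
      replace hω1 := binMeasure_ae_all hω1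
      replace hω2 := binMeasure_ae_all hω2
      have hne : (θ n (ω, 0)).2 ≠ (θ n (ω, 1)).2 := by
        intro hEq
        have hθeq : θ n (ω, 0) = θ n (ω, 1) := by
          apply Prod.ext
          · rw [hω2 0, hω2 1]
          · exact hEq
        have h01 : ((ω, 0) : Ω n × ZMod 2) = (ω, 1) := by
          rw [← hω1 0, ← hω1 1, hθeq]
        exact (by decide : (0:ZMod 2) ≠ 1) (congrArg Prod.snd h01)
      intro s
      rcases zmod2_cases s with rfl | rfl
      · apply Prod.ext
        · exact hω2 0
        · rw [zero_add]
      · apply Prod.ext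
        · exact hω2 1
        · rw [zmod2_ne _ _ hne, add_comm]
    refine ⟨fun n ω => (θ n (ω, 0)).2, ?_, ?_⟩
    · intro n
      exact measurable_snd.comp ((hθ n).measurable.comp (measurable_id.prodMk measurable_const))
    · intro n
      filter_upwards [Measure.ae_ae_of_ae_prod (hcomm n), key n,
        (hβ n).quasiMeasurePreserving.ae (key (n + 1))] with ω hcω hkω hkω'
      have h0 := binMeasure_ae_all hcω 0
      rw [hkω 0, hkω' (0 + X n ω)] at h0
      have h2 := congrArg Prod.snd h0
      simp only [zero_add] at h2
      rw [h2, add_comm]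
  · rintro ⟨U, hU, hXY⟩
    refine ⟨fun n q => (q.1, q.2 + U n q.1), fun n q => (q.1, q.2 + U n q.1), ?_, ?_, ?_, ?_, ?_, ?_⟩
    · intro n
      exact MeasurePreserving.skew_product (g := fun a c => c + U n a)
        (MeasurePreserving.id (μ n))
        (by haveI : DiscreteMeasurableSpace (ZMod 2) := ⟨fun _ => MeasurableSpace.measurableSet_top⟩; exact (measurable_of_countable (fun x : ZMod 2 × ZMod 2 => x.1 + x.2)).comp (measurable_snd.prodMk ((hU n).comp measurable_fst)))
        (Filter.Eventually.of_forall fun a => binMeasure_map_add (U n a))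
    · intro n
      exact MeasurePreserving.skew_product (g := fun a c => c + U n a)
        (MeasurePreserving.id (μ n))
        (by haveI : DiscreteMeasurableSpace (ZMod 2) := ⟨fun _ => MeasurableSpace.measurableSet_top⟩; exact (measurable_of_countable (fun x : ZMod 2 × ZMod 2 => x.1 + x.2)).comp (measurable_snd.prodMk ((hU n).comp measurable_fst)))
        (Filter.Eventually.of_forall fun a => binMeasure_map_add (U n a))
    · intro n
      apply Filter.Eventually.of_forall
      intro q
      simp [add_assoc, CharTwo.add_self_eq_zero]
    · intro n
      apply Filter.Eventually.of_forall
      intro q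
      simp [add_assoc, CharTwo.add_self_eq_zero]
    · intro n
      apply Filter.Eventually.of_forall
      intro q
      rfl
    · intro n
      filter_upwards [Measure.quasiMeasurePreserving_fst.ae (hXY n)] with q hq
      apply Prod.ext
      · rfl
      · show q.2 + X n q.1 + U (n + 1) (β n q.1) = q.2 + U n q.1 + Y n q.1
        rw [add_assoc, hq, add_comm (Y n q.1), ← add_assoc]
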